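/- Let k ≥ 2 be an integer and G a connected graph with at least k vertices and at least k edges. Then κ_k(L(G)) ≥ λ_k(G), where L(G) is the line graph of G. -/

import Mathlib

open SimpleGraph

variable {V : Type*}

/-- `T` is an `S`-Steiner tree in `G`: a subgraph of `G` that is a tree containing `S`. -/
def IsSteinerTree (G : SimpleGraph V) (S : Set V) (T : G.Subgraph) : Prop :=
  T.coe.IsTree ∧ S ⊆ T.verts

/-- There exist `n` pairwise edge-disjoint `S`-Steiner trees in `G`. -/
def EdgeDisjointPacking (G : SimpleGraph V) (S : Set V) (n : ℕ) : Prop :=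
  ∃ F : Fin n → G.Subgraph, (∀ i, IsSteinerTree G S (F i)) ∧
    ∀ i j, i ≠ j → Disjoint (F i).edgeSet (F j).edgeSet

/-- There exist `n` pairwise internally disjoint `S`-Steiner trees in `G`. -/
def InternallyDisjointPacking (G : SimpleGraph V) (S : Set V) (n : ℕ) : Prop :=
  ∃ F : Fin n → G.Subgraph, (∀ i, IsSteinerTree G S (F i)) ∧
    ∀ i j, i ≠ j →
      Disjoint (F i).edgeSet (F j).edgeSet ∧ (F i).verts ∩ (F j).verts = S

/-- `λ_G(S)`: the maximum number of pairwise edge-disjoint `S`-Steiner trees. -/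
noncomputable def steinerLambda (G : SimpleGraph V) (S : Set V) : ℕ :=
  sSup {n | EdgeDisjointPacking G S n}

/-- `κ_G(S)`: the maximum number of pairwise internally disjoint `S`-Steiner trees. -/
noncomputable def steinerKappa (G : SimpleGraph V) (S : Set V) : ℕ :=
  sSup {n | InternallyDisjointPacking G S n}

/-- `λ_k(G)`: the `k`-tree edge-connectivity of `G`. -/
noncomputable def treeEdgeConn (G : SimpleGraph V) (k : ℕ) : ℕ :=
  sInf {m | ∃ S : Set V, S.ncard = k ∧ m = steinerLambda G S}

/-- `κ_k(G)`: the `k`-tree connectivity of `G`. -/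
noncomputable def treeConn (G : SimpleGraph V) (k : ℕ) : ℕ :=
  sInf {m | ∃ S : Set V, S.ncard = k ∧ m = steinerKappa G S}

/-! ### Auxiliary lemmas -/

section Aux

variable {α : Type*}

/-- Endpoints of an element of `Sym2`. -/
lemma sym2_exists_rep (z : Sym2 α) : ∃ a b, z = s(a, b) := by
  obtain ⟨y, hy⟩ := Sym2.mem_iff_exists.mp (Sym2.out_fst_mem z)
  exact ⟨z.out.1, y, hy⟩

lemma sym2_out_eq (z : Sym2 α) : z = s(z.out.1, z.out.2) := by
  rw [Sym2.mk, z.out_eq]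

/-- A graph built from a parent function with a strictly decreasing height is acyclic. -/
lemma parentTree_isAcyclic (Γ : SimpleGraph α) (f : α → α) (h : α → ℕ) (r : α)
    (hadj : ∀ a b, Γ.Adj a b → (a ≠ r ∧ f a = b) ∨ (b ≠ r ∧ f b = a))
    (hdec : ∀ a, a ≠ r → h (f a) < h a) : Γ.IsAcyclic := by
  intro v c hc
  classical
  -- pick a support vertex of maximal height
  obtain ⟨x, hxmem, hxmax⟩ := Finset.exists_max_image c.support.toFinset h
    ⟨v, by simp [Walk.start_mem_support]⟩
  rw [List.mem_toFinset] at hxmem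
  have hmax : ∀ y ∈ c.support, h y ≤ h x := fun y hy => hxmax y (List.mem_toFinset.mpr hy)
  -- rotate the cycle to start at x
  have hc' := hc.rotate hxmem
  set c' := c.rotate x hxmem with hc'def
  have hsup : ∀ y, y ∈ c'.support → y ∈ c.support := by
    intro y hy
    rw [Walk.mem_support_iff] at hy
    rcases hy with rfl | hy
    · exact hxmem
    · have := (Walk.support_rotate c x hxmem).mem_iff.mp hy
      exact List.mem_of_mem_tail this
  have h3 := hc'.three_le_length
  -- destructure the cycle
  rcases hw : c' with _ | ⟨hxb, p⟩
  · rw [hw] at hc'; exact hc'.ne_nil rfl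
  · rename_i b
    rw [hw] at hc' h3 hsup
    -- first step: f x = b
    have hb_mem : b ∈ (Walk.cons hxb p).support := by
      rw [Walk.support_cons]; exact List.mem_cons_of_mem _ p.start_mem_support
    have hfxb : f x = b := by
      rcases hadj x b hxb with ⟨_, h1⟩ | ⟨hbr, h1⟩
      · exact h1
      · exact absurd (hmax x hxmem) (by
          have := hdec b hbr; rw [h1] at this
          exact absurd (hmax b (hsup b hb_mem)) (by omega))
    -- last step: decompose as concat
    obtain ⟨a, q, hax, hconcat⟩ := Walk.exists_cons_eq_concat hxb p
    have ha_mem : a ∈ (Walk.cons hxb p).support := by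
      rw [hconcat]
      rw [Walk.support_concat]
      exact List.mem_append_left _ q.end_mem_support
    have hfxa : f x = a := by
      rcases hadj a x hax with ⟨har, h1⟩ | ⟨_, h1⟩
      · exact absurd (hmax x hxmem) (by
          have := hdec a har; rw [h1] at this
          exact absurd (hmax a (hsup a ha_mem)) (by omega))
      · exact h1
    clear hw
    have hab : a = b := by rw [← hfxa, hfxb]
    -- contradiction with nodup edges
    have hedges1 : (Walk.cons hxb p).edges = q.edges ++ [s(a, x)] := by
      rw [hconcat, Walk.edges_concat, List.concat_eq_append]
    have hnodup := hc'.isTrail.edges_nodup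
    rw [hedges1] at hnodup
    rw [List.nodup_append] at hnodup
    have hqne : q.edges ≠ [] := by
      intro hnil
      have : q.length = 0 := by
        have := q.length_edges; rw [hnil] at this; simpa using this.symm
      have hlen : (Walk.cons hxb p).length = q.length + 1 := by
        rw [hconcat, Walk.length_concat]
      omega
    have hhead : s(x, b) ∈ q.edges := by
      have h2 : (Walk.cons hxb p).edges = s(x, b) :: p.edges := Walk.edges_cons hxb p
      rcases hq : q.edges with _ | ⟨E0, rest⟩
      · exact absurd hq hqne
      · have : E0 :: (rest ++ [s(a, x)]) = s(x, b) :: p.edges := by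
          rw [← List.cons_append, ← hq, ← hedges1, h2]
        have hE0 : E0 = s(x, b) := (List.cons_eq_cons.mp this).1
        rw [hE0]; exact List.mem_cons_self
    have hsax : s(a, x) = s(x, b) := by rw [hab, Sym2.eq_swap]
    exact hnodup.2.2 _ hhead _ (List.mem_singleton_self _) hsax.symm

/-- In a tree, two adjacent vertices have different distances to any fixed vertex. -/
lemma tree_dist_ne {Γ : SimpleGraph α} (hT : Γ.IsTree) {a b : α} (hab : Γ.Adj a b) (ρ : α) :
    Γ.dist a ρ ≠ Γ.dist b ρ := by
  classical
  intro hd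
  have hconn := hT.isConnected
  obtain ⟨wa, hwa⟩ := hconn.exists_walk_length_eq_dist a ρ
  obtain ⟨wb, hwb⟩ := hconn.exists_walk_length_eq_dist b ρ
  set pa := wa.bypass with hpa_def
  have hpa : pa.IsPath := Walk.bypass_isPath wa
  have hlena : pa.length = Γ.dist a ρ :=
    le_antisymm (le_trans (Walk.length_bypass_le wa) hwa.le) (dist_le pa)
  set pb := wb.bypass with hpb_def
  have hpb : pb.IsPath := Walk.bypass_isPath wb
  have hlenb : pb.length = Γ.dist b ρ :=
    le_antisymm (le_trans (Walk.length_bypass_le wb) hwb.le) (dist_le pb)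
  have hbns : b ∉ pa.support := by
    intro hbmem
    have hsplit := pa.take_spec hbmem
    have hlen : (pa.takeUntil b hbmem).length + (pa.dropUntil b hbmem).length = pa.length := by
      have := congrArg Walk.length hsplit
      rwa [Walk.length_append] at this
    have h1 : 1 ≤ (pa.takeUntil b hbmem).length := by
      rcases Nat.eq_zero_or_pos (pa.takeUntil b hbmem).length with h0 | h1
      · exact absurd (Walk.eq_of_length_eq_zero h0) hab.ne
      · exact h1
    have h2 : Γ.dist b ρ ≤ (pa.dropUntil b hbmem).length := dist_le _
    omega
  have hpath2 : (Walk.cons hab.symm pa).IsPath := hpa.cons hbns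
  have := hT.IsAcyclic.path_unique ⟨pb, hpb⟩ ⟨Walk.cons hab.symm pa, hpath2⟩
  have hlen2 : pb.length = (Walk.cons hab.symm pa).length := by
    rw [show pb = (Walk.cons hab.symm pa) from congrArg Subtype.val this]
  rw [Walk.length_cons] at hlen2
  omega

end Aux


section SubgraphAux

variable {G : SimpleGraph V}

/-- In a connected subgraph with at least two vertices, every vertex has a neighbour. -/
lemma subgraph_exists_adj {T : G.Subgraph} (hconn : T.coe.Connected)
    {a a' : V} (ha : a ∈ T.verts) (ha' : a' ∈ T.verts) (hne : a ≠ a') :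
    ∃ b, T.Adj a b := by
  obtain ⟨w⟩ := hconn ⟨a, ha⟩ ⟨a', ha'⟩
  have hnn : ¬ w.Nil := Walk.not_nil_of_ne (by simpa using hne)
  exact ⟨↑(w.getVert 1), Walk.adj_snd hnn⟩

/-- Edge/vertex count for a subgraph which is a tree. -/
lemma tree_ncard_edges [Fintype V] {T : G.Subgraph} (hT : T.coe.IsTree) :
    {e : G.edgeSet | (e : Sym2 V) ∈ T.edgeSet}.ncard + 1 = T.verts.ncard := by
  classical
  haveI : Fintype ↥T.verts := Fintype.ofFinite _
  haveI : Fintype ↥(T.coe.edgeSet) := Fintype.ofFinite _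
  have hcard := hT.card_edgeFinset
  have h1 : Sym2.map (Subtype.val : T.verts → V) '' T.coe.edgeSet = T.edgeSet := by
    ext z
    constructor
    · rintro ⟨ε, hε, rfl⟩
      obtain ⟨u, v, rfl⟩ := sym2_exists_rep ε
      have : T.coe.Adj u v := hε
      exact Subgraph.mem_edgeSet.mpr this
    · intro hz
      obtain ⟨aa, bb, rfl⟩ := sym2_exists_rep z
      have hadj : T.Adj aa bb := Subgraph.mem_edgeSet.mp hz
      exact ⟨s(⟨aa, T.edge_vert hadj⟩, ⟨bb, T.edge_vert hadj.symm⟩),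
        Subgraph.mem_edgeSet.mpr hadj, rfl⟩
  have hinj2 : Function.Injective (Sym2.map (Subtype.val : T.verts → V)) :=
    Sym2.map.injective Subtype.val_injective
  have h2 : T.coe.edgeSet.ncard = T.edgeSet.ncard := by
    rw [← h1, Set.ncard_image_of_injective _ hinj2]
  have h3 : Subtype.val '' {e : G.edgeSet | (e : Sym2 V) ∈ T.edgeSet} = T.edgeSet := by
    rw [show {e : G.edgeSet | (e : Sym2 V) ∈ T.edgeSet}
        = (Subtype.val : G.edgeSet → Sym2 V) ⁻¹' T.edgeSet from rfl,
      Subtype.image_preimage_coe]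
    exact Set.inter_eq_right.mpr T.edgeSet_subset
  have h4 : {e : G.edgeSet | (e : Sym2 V) ∈ T.edgeSet}.ncard = T.edgeSet.ncard := by
    calc {e : G.edgeSet | (e : Sym2 V) ∈ T.edgeSet}.ncard
        = (Subtype.val '' {e : G.edgeSet | (e : Sym2 V) ∈ T.edgeSet}).ncard :=
          (Set.ncard_image_of_injective _ Subtype.val_injective).symm
      _ = T.edgeSet.ncard := by rw [h3]
  have h5 : T.coe.edgeFinset.card = T.coe.edgeSet.ncard := by
    rw [edgeFinset_card, ← Nat.card_coe_set_eq, Nat.card_eq_fintype_card]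
  have h6 : Fintype.card ↥T.verts = T.verts.ncard := by
    rw [Set.ncard_eq_toFinset_card', Set.toFinset_card]
  omega

lemma internally_bound {β : Type*} [Finite β] {H : SimpleGraph β} {S : Set β}
    (hS : 1 < S.ncard) :
    ∀ n, InternallyDisjointPacking H S n → n ≤ Nat.card (Sym2 β) := by
  rintro n ⟨F, hst, hdisj⟩
  have hedge : ∀ i, ∃ z, z ∈ (F i).edgeSet := by
    intro i
    obtain ⟨a, ha, b, hb, hne⟩ := (Set.one_lt_ncard (Set.toFinite S)).mp hS
    obtain ⟨bb, hadj⟩ := subgraph_exists_adj (hst i).1.isConnected ((hst i).2 ha) ((hst i).2 hb) hne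
    exact ⟨s(a, bb), Subgraph.mem_edgeSet.mpr hadj⟩
  choose z hz using hedge
  have hinj : Function.Injective z := by
    intro i j hij
    by_contra hne
    exact Set.disjoint_left.mp ((hdisj i j hne).1) (hz i) (hij ▸ hz j)
  calc n = Nat.card (Fin n) := by simp
    _ ≤ Nat.card (Sym2 β) := Nat.card_le_card_of_injective z hinj

end SubgraphAux


section HallW

variable [Fintype V] {G : SimpleGraph V}

/-- Choice of the terminal vertex set `W` from a set of `k` edges, using a maximum-deficiency
set `A₀` and a Hall system of distinct representatives outside of it. -/
lemma exists_W (k : ℕ) (hv : k ≤ Fintype.card V) (S₀ : Set G.edgeSet) (hS₀ : S₀.ncard = k) :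
    ∃ (W : Finset V) (A₀ : Finset G.edgeSet) (x : G.edgeSet → V),
      W.card = k ∧
      (∀ e ∈ A₀, e ∈ S₀) ∧
      (∀ e ∈ A₀, ∀ a ∈ (e : Sym2 V), a ∈ W) ∧
      (∀ e, e ∈ S₀ → e ∉ A₀ → x e ∈ (e : Sym2 V) ∧ x e ∈ W ∧ ∀ g ∈ A₀, x e ∉ (g : Sym2 V)) ∧
      (∀ e f, e ∈ S₀ → e ∉ A₀ → f ∈ S₀ → f ∉ A₀ → x e = x f → e = f) := by
  classical
  set S' : Finset G.edgeSet := S₀.toFinset with hS'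
  have hS'card : S'.card = k := by rw [← hS₀, Set.ncard_eq_toFinset_card']
  set ends : G.edgeSet → Finset V := fun e => {(e : Sym2 V).out.1, (e : Sym2 V).out.2} with hends
  have hmem_ends : ∀ (e : G.edgeSet) (a : V), a ∈ ends e ↔ a ∈ (e : Sym2 V) := by
    intro e a
    simp only [hends, Finset.mem_insert, Finset.mem_singleton]
    constructor
    · rintro (rfl | rfl)
      exacts [Sym2.out_fst_mem _, Sym2.out_snd_mem _]
    · intro ha
      rw [sym2_out_eq (e : Sym2 V), Sym2.mem_iff] at ha
      exact ha
  set d : Finset G.edgeSet → ℤ := fun A => (A.card : ℤ) - ((A.biUnion ends).card : ℤ) with hd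
  obtain ⟨A₀, hA₀mem, hA₀max⟩ := S'.powerset.exists_max_image d ⟨∅, Finset.empty_mem_powerset _⟩
  rw [Finset.mem_powerset] at hA₀mem
  set N₀ : Finset V := A₀.biUnion ends with hN₀
  have hdef0 : (N₀.card : ℤ) ≤ (A₀.card : ℤ) := by
    have h1 := hA₀max ∅ (Finset.empty_mem_powerset _)
    have h0 : d ∅ = 0 := by simp [hd]
    rw [h0] at h1
    simp only [hd, hN₀] at h1 ⊢
    linarith
  -- Hall condition for the remaining edges
  set t : {e // e ∈ S' \ A₀} → Finset V := fun e => ends ↑e \ N₀ with ht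
  have hall : ∀ s : Finset {e // e ∈ S' \ A₀}, s.card ≤ (s.biUnion t).card := by
    intro s
    set B : Finset G.edgeSet := s.image Subtype.val with hB
    have hBcard : B.card = s.card := Finset.card_image_of_injective _ Subtype.val_injective
    have hBsub : B ⊆ S' \ A₀ := by
      intro e he
      obtain ⟨ε, _, rfl⟩ := Finset.mem_image.mp he
      exact ε.2
    have hdisjAB : Disjoint A₀ B := by
      rw [Finset.disjoint_left]
      intro e heA heB
      exact (Finset.mem_sdiff.mp (hBsub heB)).2 heA
    have hub := hA₀max (A₀ ∪ B) (Finset.mem_powerset.mpr (Finset.union_subset hA₀mem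
      (hBsub.trans Finset.sdiff_subset)))
    have hcardU : (A₀ ∪ B).card = A₀.card + B.card := Finset.card_union_of_disjoint hdisjAB
    have hsubU : (A₀ ∪ B).biUnion ends ⊆ N₀ ∪ s.biUnion t := by
      intro a ha
      obtain ⟨e, he, hae⟩ := Finset.mem_biUnion.mp ha
      rcases Finset.mem_union.mp he with heA | heB
      · exact Finset.mem_union_left _ (Finset.mem_biUnion.mpr ⟨e, heA, hae⟩)
      · by_cases haN : a ∈ N₀
        · exact Finset.mem_union_left _ haN
        · obtain ⟨ε, hε, rfl⟩ := Finset.mem_image.mp heB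
          exact Finset.mem_union_right _ (Finset.mem_biUnion.mpr
            ⟨ε, hε, Finset.mem_sdiff.mpr ⟨hae, haN⟩⟩)
    have hcard2 : ((A₀ ∪ B).biUnion ends).card ≤ N₀.card + (s.biUnion t).card :=
      le_trans (Finset.card_le_card hsubU) (Finset.card_union_le _ _)
    simp only [hd] at hub
    rw [hcardU] at hub
    have : (s.card : ℤ) ≤ ((s.biUnion t).card : ℤ) := by
      push_cast at hub hcard2 ⊢
      rw [hBcard] at hub
      linarith
    exact_mod_cast this
  obtain ⟨x', hx'inj, hx'mem⟩ := (Finset.all_card_le_biUnion_card_iff_exists_injective t).mp hall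
  set x : G.edgeSet → V := fun e =>
    if h : e ∈ S' \ A₀ then x' ⟨e, h⟩ else (e : Sym2 V).out.1 with hx
  set W₀ : Finset V := N₀ ∪ (S' \ A₀).attach.image x' with hW₀
  have hW₀card : W₀.card ≤ k := by
    have h1 : W₀.card ≤ N₀.card + ((S' \ A₀).attach.image x').card := Finset.card_union_le _ _
    have h2 : ((S' \ A₀).attach.image x').card ≤ (S' \ A₀).card := by
      refine le_trans (Finset.card_image_le) ?_
      rw [Finset.card_attach]
    have h3 : (S' \ A₀).card = S'.card - A₀.card := Finset.card_sdiff_of_subset hA₀mem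
    have h4 : A₀.card ≤ S'.card := Finset.card_le_card hA₀mem
    have h5 : (N₀.card : ℤ) ≤ A₀.card := hdef0
    have h5' : N₀.card ≤ A₀.card := by exact_mod_cast h5
    omega
  obtain ⟨W, hWsub, hWcard⟩ := Finset.exists_superset_card_eq hW₀card hv
  have hW₀W : W₀ ⊆ W := hWsub
  refine ⟨W, A₀, x, hWcard, ?_, ?_, ?_, ?_⟩
  · intro e he
    exact Set.mem_toFinset.mp (hA₀mem he)
  · intro e he a ha
    exact hW₀W (Finset.mem_union_left _ (Finset.mem_biUnion.mpr
      ⟨e, he, (hmem_ends e a).mpr ha⟩))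
  · intro e heS heA
    have hmem : e ∈ S' \ A₀ := Finset.mem_sdiff.mpr ⟨Set.mem_toFinset.mpr heS, heA⟩
    have hxe : x e = x' ⟨e, hmem⟩ := by rw [hx]; exact dif_pos hmem
    have hx'spec := hx'mem ⟨e, hmem⟩
    rw [ht] at hx'spec
    have hin : x' ⟨e, hmem⟩ ∈ ends e := (Finset.mem_sdiff.mp hx'spec).1
    have hnotN : x' ⟨e, hmem⟩ ∉ N₀ := (Finset.mem_sdiff.mp hx'spec).2
    refine ⟨by rw [hxe]; exact (hmem_ends e _).mp hin, ?_, ?_⟩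
    · rw [hxe]
      exact hW₀W (Finset.mem_union_right _ (Finset.mem_image.mpr
        ⟨⟨e, hmem⟩, Finset.mem_attach _ _, rfl⟩))
    · intro g hg hxg
      rw [hxe] at hxg
      exact hnotN (Finset.mem_biUnion.mpr ⟨g, hg, (hmem_ends g _).mpr hxg⟩)
  · intro e f heS heA hfS hfA hxef
    have hmeme : e ∈ S' \ A₀ := Finset.mem_sdiff.mpr ⟨Set.mem_toFinset.mpr heS, heA⟩
    have hmemf : f ∈ S' \ A₀ := Finset.mem_sdiff.mpr ⟨Set.mem_toFinset.mpr hfS, hfA⟩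
    have : x' ⟨e, hmeme⟩ = x' ⟨f, hmemf⟩ := by
      simp only [hx] at hxef
      rwa [dif_pos hmeme, dif_pos hmemf] at hxef
    exact Subtype.ext_iff.mp (hx'inj this)

end HallW


section Main

variable [Fintype V] {G : SimpleGraph V}

lemma main_construction (hG : G.Connected) (k : ℕ) (hk : 2 ≤ k)
    (hv : k ≤ Fintype.card V) (S₀ : Set G.edgeSet) (hS₀ : S₀.ncard = k) :
    ∃ W : Finset V, W.card = k ∧
      ∀ n, EdgeDisjointPacking G (↑W : Set V) n →
        InternallyDisjointPacking G.lineGraph S₀ n := by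
  classical
  obtain ⟨W, A₀, x, hWcard, hA₀S, hA₀W, hxspec, hxinj⟩ := exists_W k hv S₀ hS₀
  refine ⟨W, hWcard, ?_⟩
  rintro n ⟨F, hst, hdisj⟩
  have hTree : ∀ i, (F i).coe.IsTree := fun i => (hst i).1
  have hWsub : ∀ i, (W : Set V) ⊆ (F i).verts := fun i => (hst i).2
  set E : Fin n → Set G.edgeSet := fun i => {e | (e : Sym2 V) ∈ (F i).edgeSet} with hE
  have hEdisj : ∀ i j, i ≠ j → ∀ e, e ∈ E i → e ∈ E j → False := by
    intro i j hij e hei hej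
    exact Set.disjoint_left.mp (hdisj i j hij) hei hej
  obtain ⟨w1, hw1, w2, hw2, hw12⟩ := Finset.one_lt_card.mp (show 1 < W.card by omega)
  have hWvert : ∀ i, ∀ a ∈ W, a ∈ (F i).verts := fun i a ha => hWsub i ha
  have hAdjAt : ∀ i, ∀ a ∈ (F i).verts, ∃ b, (F i).Adj a b := by
    intro i a ha
    rcases eq_or_ne a w2 with rfl | hne
    · exact subgraph_exists_adj (hTree i).isConnected ha (hWvert i w1 hw1) (Ne.symm hw12)
    · exact subgraph_exists_adj (hTree i).isConnected ha (hWvert i w2 hw2) hne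
  have hroot : ∀ i, ∃ w₀, w₀ ∈ (F i).verts ∧
      ((∃ h', h' ∈ E i ∧ h' ∉ A₀ ∧ w₀ ∈ (h' : Sym2 V)) ∨ (∀ e ∈ E i, e ∈ A₀)) := by
    intro i
    by_cases hfull : ∀ e ∈ E i, e ∈ A₀
    · exact ⟨w1, hWvert i w1 hw1, Or.inr hfull⟩
    · push_neg at hfull
      obtain ⟨e, hei, heA⟩ := hfull
      obtain ⟨a, b, hab⟩ := sym2_exists_rep (e : Sym2 V)
      have hadj : (F i).Adj a b := Subgraph.mem_edgeSet.mp (by rw [← hab]; exact hei)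
      exact ⟨a, (F i).edge_vert hadj, Or.inl ⟨e, hei, heA, by rw [hab]; exact Sym2.mem_mk_left _ _⟩⟩
  choose w₀ hw₀v hw₀alt using hroot
  set di : Fin n → V → ℕ := fun i a =>
    if h : a ∈ (F i).verts then (F i).coe.dist ⟨a, h⟩ ⟨w₀ i, hw₀v i⟩ else 0 with hdi
  have hdi_eq : ∀ i a (h : a ∈ (F i).verts),
      di i a = (F i).coe.dist ⟨a, h⟩ ⟨w₀ i, hw₀v i⟩ := fun i a h => dif_pos h
  have hdiBound : ∀ i a, di i a < Fintype.card V := by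
    intro i a
    haveI : Fintype ↥(F i).verts := Fintype.ofFinite _
    by_cases h : a ∈ (F i).verts
    · rw [hdi_eq i a h]
      obtain ⟨w, hw⟩ := (hTree i).isConnected.exists_walk_length_eq_dist ⟨a, h⟩ ⟨w₀ i, hw₀v i⟩
      have h1 : (F i).coe.dist ⟨a, h⟩ ⟨w₀ i, hw₀v i⟩ ≤ w.bypass.length := dist_le _
      have h2 : w.bypass.length < Fintype.card ↥(F i).verts := (Walk.bypass_isPath w).length_lt
      have h3 : Fintype.card ↥(F i).verts ≤ Fintype.card V :=
        Fintype.card_le_of_injective _ Subtype.val_injective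
      omega
    · have : di i a = 0 := dif_neg h
      omega
  have hdine : ∀ i a b, (F i).Adj a b → di i a ≠ di i b := by
    intro i a b hadj
    have ha := (F i).edge_vert hadj
    have hb := (F i).edge_vert hadj.symm
    rw [hdi_eq i a ha, hdi_eq i b hb]
    exact tree_dist_ne (hTree i) (show (F i).coe.Adj ⟨a, ha⟩ ⟨b, hb⟩ from hadj) _
  have hcex : ∀ i e, ∃ cc, e ∈ E i → cc ∈ (e : Sym2 V) ∧ cc ∈ (F i).verts ∧
      ∀ b ∈ (e : Sym2 V), b ≠ cc → di i cc < di i b := by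
    intro i e
    by_cases he : e ∈ E i
    · obtain ⟨a, b, hab⟩ := sym2_exists_rep (e : Sym2 V)
      have hadj : (F i).Adj a b := Subgraph.mem_edgeSet.mp (by rw [← hab]; exact he)
      have ha := (F i).edge_vert hadj
      have hb := (F i).edge_vert hadj.symm
      have hne := hdine i a b hadj
      rcases lt_or_gt_of_ne hne with hlt | hgt
      · refine ⟨a, fun _ => ⟨by rw [hab]; exact Sym2.mem_mk_left _ _, ha, ?_⟩⟩
        intro b' hb' hbne
        rw [hab, Sym2.mem_iff] at hb'
        rcases hb' with rfl | rfl
        · exact absurd rfl hbne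
        · exact hlt
      · refine ⟨b, fun _ => ⟨by rw [hab]; exact Sym2.mem_mk_right _ _, hb, ?_⟩⟩
        intro b' hb' hbne
        rw [hab, Sym2.mem_iff] at hb'
        rcases hb' with rfl | rfl
        · exact hgt
        · exact absurd rfl hbne
    · exact ⟨(e : Sym2 V).out.1, fun h => absurd h he⟩
  choose c hc using hcex
  have hrex : ∀ i, ∃ re, re ∈ E i ∧ w₀ i ∈ (re : Sym2 V) := by
    intro i
    obtain ⟨b, hadj⟩ := hAdjAt i (w₀ i) (hw₀v i)
    exact ⟨⟨s(w₀ i, b), (F i).adj_sub hadj⟩, Subgraph.mem_edgeSet.mpr hadj,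
      Sym2.mem_mk_left _ _⟩
  choose r hrE hrw using hrex
  have hPE : ∀ i a, a ∈ (F i).verts → a ≠ w₀ i →
      ∃ pe a', pe ∈ E i ∧ (pe : Sym2 V) = s(a, a') ∧ di i a' < di i a := by
    intro i a ha hne
    obtain ⟨w, hw⟩ := (hTree i).isConnected.exists_walk_length_eq_dist ⟨a, ha⟩ ⟨w₀ i, hw₀v i⟩
    have hd0 : di i a ≠ 0 := by
      rw [hdi_eq i a ha]
      intro h0
      rw [h0] at hw
      exact hne (congrArg Subtype.val (Walk.eq_of_length_eq_zero hw))
    have hnn : ¬ w.Nil := by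
      rw [Walk.nil_iff_length_eq, hw, ← hdi_eq i a ha]
      exact hd0
    have hadj : (F i).coe.Adj ⟨a, ha⟩ (w.getVert 1) := Walk.adj_snd hnn
    have hadj' : (F i).Adj a ↑(w.getVert 1) := hadj
    refine ⟨⟨s(a, ↑(w.getVert 1)), (F i).adj_sub hadj'⟩, ↑(w.getVert 1),
      Subgraph.mem_edgeSet.mpr hadj', rfl, ?_⟩
    have h1 : di i ↑(w.getVert 1) ≤ w.tail.length := by
      rw [hdi_eq i ↑(w.getVert 1) (w.getVert 1).2]
      exact dist_le _
    have h2 : w.tail.length + 1 = w.length := Walk.length_tail_add_one hnn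
    rw [hdi_eq i a ha, ← hw]
    omega
  have hc2 : ∀ i pe a a', pe ∈ E i → (pe : Sym2 V) = s(a, a') → di i a' < di i a →
      c i pe = a' := by
    intro i pe a a' hpe heq hlt
    obtain ⟨hmem, hverts, hmin⟩ := hc i pe hpe
    have hmem' := hmem
    rw [heq, Sym2.mem_iff] at hmem'
    rcases hmem' with h1 | h1
    · exfalso
      have ha'mem : a' ∈ (pe : Sym2 V) := by rw [heq]; exact Sym2.mem_mk_right _ _
      have hne : a' ≠ c i pe := by
        rw [h1]; intro hh; rw [hh] at hlt; exact lt_irrefl _ hlt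
      have := hmin a' ha'mem hne
      rw [h1] at this
      omega
    · exact h1
  set vv : G.edgeSet → V := fun e =>
    if h : ∃ i, e ∈ E i then c h.choose e else (e : Sym2 V).out.1 with hvv
  set va : G.edgeSet → V := fun e => if e ∈ A₀ then vv e else x e with hva
  have hv1 : ∀ e, e ∈ S₀ → va e ∈ (e : Sym2 V) ∧ va e ∈ (W : Set V) := by
    intro e heS
    by_cases heA : e ∈ A₀
    · have hva_eq : va e = vv e := if_pos heA
      rw [hva_eq]
      by_cases hex : ∃ i, e ∈ E i
      · have hvv_eq : vv e = c hex.choose e := dif_pos hex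
        rw [hvv_eq]
        obtain ⟨hm, _, _⟩ := hc hex.choose e hex.choose_spec
        exact ⟨hm, Finset.mem_coe.mpr (hA₀W e heA _ hm)⟩
      · have hvv_eq : vv e = (e : Sym2 V).out.1 := dif_neg hex
        rw [hvv_eq]
        exact ⟨Sym2.out_fst_mem _, Finset.mem_coe.mpr (hA₀W e heA _ (Sym2.out_fst_mem _))⟩
    · have hva_eq : va e = x e := if_neg heA
      rw [hva_eq]
      obtain ⟨h1, h2, _⟩ := hxspec e heS heA
      exact ⟨h1, Finset.mem_coe.mpr h2⟩
  have hv4 : ∀ i e, e ∈ E i → e ∈ A₀ → va e = c i e := by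
    intro i e hei heA
    have hex : ∃ j, e ∈ E j := ⟨i, hei⟩
    have h1 : va e = c hex.choose e := by
      rw [show va e = vv e from if_pos heA]
      exact dif_pos hex
    have h2 : hex.choose = i := by
      by_contra hne
      exact hEdisj _ _ hne e hex.choose_spec hei
    rw [h1, h2]
  have hfex : ∀ i e, ∃ g, (e ∈ S₀ ∧ e ∉ E i) → g ∈ E i ∧ va e ∈ (g : Sym2 V) ∧
      ((g ∈ S₀ ∧ va g = va e) →
        ∀ g', g' ∈ E i → va e ∈ (g' : Sym2 V) → g' ∈ S₀ ∧ va g' = va e) := by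
    intro i e
    by_cases hyp : e ∈ S₀ ∧ e ∉ E i
    · obtain ⟨heS, heE⟩ := hyp
      have hvW : va e ∈ (W : Set V) := (hv1 e heS).2
      have hvverts : va e ∈ (F i).verts := hWsub i hvW
      have hcand : ∃ g, g ∈ E i ∧ va e ∈ (g : Sym2 V) := by
        by_cases hvw : va e = w₀ i
        · exact ⟨r i, hrE i, by rw [hvw]; exact hrw i⟩
        · obtain ⟨pe, a', hpe, heq, _⟩ := hPE i (va e) hvverts hvw
          exact ⟨pe, hpe, by rw [heq]; exact Sym2.mem_mk_left _ _⟩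
      by_cases hgood : ∃ g, (g ∈ E i ∧ va e ∈ (g : Sym2 V)) ∧ ¬(g ∈ S₀ ∧ va g = va e)
      · obtain ⟨g, ⟨h1, h2⟩, h3⟩ := hgood
        exact ⟨g, fun _ => ⟨h1, h2, fun hcontra => (h3 hcontra).elim⟩⟩
      · push_neg at hgood
        obtain ⟨g, h1, h2⟩ := hcand
        exact ⟨g, fun _ => ⟨h1, h2, fun _ => fun g' hg1 hg2 => hgood g' ⟨hg1, hg2⟩⟩⟩
    · exact ⟨e, fun h => absurd h hyp⟩
  choose f hf using hfex
  set Ht : Fin n → G.edgeSet → ℕ := fun i e =>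
    if e = r i then 0 else if e ∈ E i then di i (c i e) + 1 else Fintype.card V + 1 with hHt
  have hPeex : ∀ i e, ∃ pe, (e ∈ E i ∧ e ≠ r i) → pe ∈ E i ∧
      (∃ a, a ∈ (e : Sym2 V) ∧ a ∈ (pe : Sym2 V)) ∧ pe ≠ e ∧ Ht i pe < Ht i e := by
    intro i e
    by_cases hyp : e ∈ E i ∧ e ≠ r i
    · obtain ⟨hei, hner⟩ := hyp
      obtain ⟨hcm, hcv, hcmin⟩ := hc i e hei
      have hHte : Ht i e = di i (c i e) + 1 := by
        simp only [hHt]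
        rw [if_neg hner, if_pos hei]
      by_cases hcw : c i e = w₀ i
      · refine ⟨r i, fun _ => ⟨hrE i, ⟨w₀ i, by rw [← hcw]; exact hcm, hrw i⟩,
          fun hh => hner hh.symm, ?_⟩⟩
        have hHtr : Ht i (r i) = 0 := by simp [hHt]
        rw [hHtr, hHte]; omega
      · obtain ⟨pe, a', hpe, heq, hlt⟩ := hPE i (c i e) hcv hcw
        have hcpe : c i pe = a' := hc2 i pe (c i e) a' hpe heq hlt
        have hpene : pe ≠ e := by
          intro hh
          rw [hh] at hcpe
          rw [hcpe] at hlt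
          exact lt_irrefl _ hlt
        refine ⟨pe, fun _ => ⟨hpe, ⟨c i e, hcm, by rw [heq]; exact Sym2.mem_mk_left _ _⟩,
          hpene, ?_⟩⟩
        rw [hHte]
        by_cases hper : pe = r i
        · have : Ht i pe = 0 := by simp only [hHt]; rw [if_pos hper]
          omega
        · have : Ht i pe = di i (c i pe) + 1 := by
            simp only [hHt]; rw [if_neg hper, if_pos hpe]
          rw [this, hcpe]
          omega
    · exact ⟨e, fun h => absurd h hyp⟩
  choose Pe hPe using hPeex
  set Fp : Fin n → G.edgeSet → G.edgeSet := fun i e =>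
    if e ∈ E i then (if e = r i then e else Pe i e) else (if e ∈ S₀ then f i e else e) with hFp
  have hFpS : ∀ i e, e ∈ S₀ → e ∉ E i → Fp i e = f i e := by
    intro i e heS heE
    simp only [hFp]
    rw [if_neg heE, if_pos heS]
  have hFpE : ∀ i e, e ∈ E i → e ≠ r i → Fp i e = Pe i e := by
    intro i e hei hner
    simp only [hFp]
    rw [if_pos hei, if_neg hner]
  have hFpSpec : ∀ i e, e ∈ E i ∪ S₀ → e ≠ r i → Fp i e ∈ E i ∧ Fp i e ≠ e ∧
      (∃ a, a ∈ (e : Sym2 V) ∧ a ∈ (Fp i e : Sym2 V)) ∧ Ht i (Fp i e) < Ht i e := by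
    intro i e hmem hner
    by_cases hei : e ∈ E i
    · rw [hFpE i e hei hner]
      obtain ⟨h1, h2, h3, h4⟩ := hPe i e ⟨hei, hner⟩
      exact ⟨h1, h3, h2, h4⟩
    · have heS : e ∈ S₀ := by
        rcases hmem with h | h
        · exact absurd h hei
        · exact h
      rw [hFpS i e heS hei]
      obtain ⟨h1, h2, h3⟩ := hf i e ⟨heS, hei⟩
      refine ⟨h1, fun hh => hei (hh ▸ h1), ⟨va e, (hv1 e heS).1, h2⟩, ?_⟩
      have hHte : Ht i e = Fintype.card V + 1 := by
        simp only [hHt]; rw [if_neg hner, if_neg hei]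
      rw [hHte]
      by_cases hfr : f i e = r i
      · have : Ht i (f i e) = 0 := by simp only [hHt]; rw [if_pos hfr]
        omega
      · have : Ht i (f i e) = di i (c i (f i e)) + 1 := by
          simp only [hHt]; rw [if_neg hfr, if_pos h1]
        have := hdiBound i (c i (f i e))
        omega
  -- the conflict-freeness core
  have hconflict : ∀ i j, i ≠ j → ∀ e g, e ∈ S₀ → e ∉ E i → g ∈ S₀ → g ∉ E j →
      f i e = g → f j g = e → False := by
    intro i j hij e g heS heEi hgS hgEj hfie hfjg
    have hspec_i := hf i e ⟨heS, heEi⟩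
    rw [hfie] at hspec_i
    obtain ⟨hgEi, hveg, himp_i⟩ := hspec_i
    have hspec_j := hf j g ⟨hgS, hgEj⟩
    rw [hfjg] at hspec_j
    obtain ⟨heEj, hvge, himp_j⟩ := hspec_j
    have hne : e ≠ g := fun hh => heEi (hh ▸ hgEi)
    -- the common attachment vertex
    have hveq : va e = va g := by
      by_contra hneq
      have h1 : va e ∈ (e : Sym2 V) := (hv1 e heS).1
      have h2 : va g ∈ (g : Sym2 V) := (hv1 g hgS).1
      have := Sym2.eq_of_ne_mem hneq h1 hvge hveg h2
      exact hne (Subtype.ext this)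
    -- both `e` and `g` lie in `A₀`
    have heA : e ∈ A₀ := by
      by_contra heA
      by_cases hgA : g ∈ A₀
      · have hx3 := (hxspec e heS heA).2.2 g hgA
        have hxe : va e = x e := if_neg heA
        exact hx3 (by rw [← hxe, hveq]; exact (hv1 g hgS).1)
      · have hxe : va e = x e := if_neg heA
        have hxg : va g = x g := if_neg hgA
        exact hne (hxinj e g heS heA hgS hgA (by rw [← hxe, ← hxg, hveq]))
    have hgA : g ∈ A₀ := by
      by_contra hgA
      have hx3 := (hxspec g hgS hgA).2.2 e heA
      have hxg : va g = x g := if_neg hgA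
      exact hx3 (by rw [← hxg, ← hveq]; exact (hv1 e heS).1)
    -- any edge of `S₀` attached at `vx` lies in `A₀`
    have hvxN : ∀ e', e' ∈ S₀ → va e' = va e → e' ∈ A₀ := by
      intro e' he'S hve'
      by_contra he'A
      have h1 : va e' = x e' := if_neg he'A
      exact ((hxspec e' he'S he'A).2.2 g hgA) (by rw [← h1, hve']; exact hveg)
    -- one-sided analysis: a forced tree is entirely inside `A₀`
    have hside : ∀ (i' : Fin n) (e' : G.edgeSet), e' ∈ S₀ → e' ∉ E i' →
        (f i' e' ∈ S₀ ∧ va (f i' e') = va e') → va e' = va e →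
        ∀ e'', e'' ∈ E i' → e'' ∈ A₀ := by
      intro i' e' he'S he'E htrig hvxe'
      have hdang := (hf i' e' ⟨he'S, he'E⟩).2.2 htrig
      rw [hvxe'] at hdang
      have hdangA : ∀ g', g' ∈ E i' → va e ∈ (g' : Sym2 V) → g' ∈ A₀ ∧ va g' = va e := by
        intro g' h1 h2
        obtain ⟨h3, h4⟩ := hdang g' h1 h2
        exact ⟨hvxN g' h3 h4, h4⟩
      have hvxW : va e ∈ (W : Set V) := (hv1 e heS).2
      have hvxverts : va e ∈ (F i').verts := hWsub i' hvxW
      have hvw : va e = w₀ i' := by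
        by_contra hvw
        obtain ⟨pe, a', hpe, heq, hlt⟩ := hPE i' (va e) hvxverts hvw
        have h5 := hdangA pe hpe (by rw [heq]; exact Sym2.mem_mk_left _ _)
        have h6 : va pe = c i' pe := hv4 i' pe hpe h5.1
        have h7 : c i' pe = a' := hc2 i' pe (va e) a' hpe heq hlt
        have h8 : a' = va e := by rw [← h7, ← h6]; exact h5.2
        rw [h8] at hlt
        exact lt_irrefl _ hlt
      rcases hw₀alt i' with ⟨h', hh1, hh2, hh3⟩ | hfull
      · have := hdangA h' hh1 (by rw [hvw]; exact hh3)
        exact (hh2 this.1).elim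
      · exact hfull
    have hfull_i : ∀ e'', e'' ∈ E i → e'' ∈ A₀ :=
      hside i e heS heEi (by rw [hfie]; exact ⟨hgS, hveq.symm⟩) rfl
    have hfull_j : ∀ e'', e'' ∈ E j → e'' ∈ A₀ :=
      hside j g hgS hgEj (by rw [hfjg]; exact ⟨heS, hveq⟩) hveq.symm
    -- counting: two edge-disjoint spanning-ish trees inside `A₀` are impossible
    have hEiA : E i ⊆ (↑A₀ : Set G.edgeSet) := fun e'' h => Finset.mem_coe.mpr (hfull_i e'' h)
    have hEjA : E j ⊆ (↑A₀ : Set G.edgeSet) := fun e'' h => Finset.mem_coe.mpr (hfull_j e'' h)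
    have hdisjEE : Disjoint (E i) (E j) :=
      Set.disjoint_left.mpr fun {e''} h1 h2 => (hEdisj i j hij e'' h1 h2).elim
    have hsubA : E i ∪ E j ⊆ (↑A₀ : Set G.edgeSet) := Set.union_subset hEiA hEjA
    have hcardU : (E i ∪ E j).ncard = (E i).ncard + (E j).ncard :=
      Set.ncard_union_eq hdisjEE (Set.toFinite _) (Set.toFinite _)
    have hA₀k : (↑A₀ : Set G.edgeSet).ncard ≤ k := by
      rw [Set.ncard_coe_finset]
      calc A₀.card ≤ S₀.toFinset.card :=
            Finset.card_le_card fun e'' he'' => Set.mem_toFinset.mpr (hA₀S e'' he'')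
        _ = k := by rw [← Set.ncard_eq_toFinset_card', hS₀]
    have hle : (E i ∪ E j).ncard ≤ k :=
      le_trans (Set.ncard_le_ncard hsubA (Set.toFinite _)) hA₀k
    have hti : (E i).ncard + 1 = (F i).verts.ncard := by
      simp only [hE]
      exact tree_ncard_edges (hTree i)
    have htj : (E j).ncard + 1 = (F j).verts.ncard := by
      simp only [hE]
      exact tree_ncard_edges (hTree j)
    have hWncard : (W : Set V).ncard = k := by rw [Set.ncard_coe_finset, hWcard]
    have hvi : k ≤ (F i).verts.ncard := by
      have := Set.ncard_le_ncard (hWsub i) (Set.toFinite _)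
      omega
    have hvj : k ≤ (F j).verts.ncard := by
      have := Set.ncard_le_ncard (hWsub j) (Set.toFinite _)
      omega
    have hk2 : k = 2 ∧ (E i).ncard = 1 ∧ (E j).ncard = 1 ∧
        (F i).verts.ncard = 2 ∧ (F j).verts.ncard = 2 := by omega
    obtain ⟨hk2', hEi1, hEj1, hVi2, hVj2⟩ := hk2
    have hveq_i : (F i).verts = (W : Set V) :=
      (Set.eq_of_subset_of_ncard_le (hWsub i) (by omega) (Set.toFinite _)).symm
    have hveq_j : (F j).verts = (W : Set V) :=
      (Set.eq_of_subset_of_ncard_le (hWsub j) (by omega) (Set.toFinite _)).symm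
    obtain ⟨e1, hE1⟩ := Set.ncard_eq_one.mp hEi1
    obtain ⟨e2, hE2⟩ := Set.ncard_eq_one.mp hEj1
    have he1 : e1 ∈ E i := by rw [hE1]; exact Set.mem_singleton _
    have he2 : e2 ∈ E j := by rw [hE2]; exact Set.mem_singleton _
    obtain ⟨a1, b1, hab1⟩ := sym2_exists_rep (e1 : Sym2 V)
    obtain ⟨a2, b2, hab2⟩ := sym2_exists_rep (e2 : Sym2 V)
    have hadj1 : (F i).Adj a1 b1 := Subgraph.mem_edgeSet.mp (by rw [← hab1]; exact he1)
    have hadj2 : (F j).Adj a2 b2 := Subgraph.mem_edgeSet.mp (by rw [← hab2]; exact he2)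
    have hane1 : a1 ≠ b1 := hadj1.ne
    have hane2 : a2 ≠ b2 := hadj2.ne
    have ha1W : a1 ∈ (W : Set V) := hveq_i ▸ (F i).edge_vert hadj1
    have hb1W : b1 ∈ (W : Set V) := hveq_i ▸ (F i).edge_vert hadj1.symm
    have ha2W : a2 ∈ (W : Set V) := hveq_j ▸ (F j).edge_vert hadj2
    have hb2W : b2 ∈ (W : Set V) := hveq_j ▸ (F j).edge_vert hadj2.symm
    have hWpair : (W : Set V) = {a1, b1} := by
      refine (Set.eq_of_subset_of_ncard_le ?_ ?_ (Set.toFinite _)).symm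
      · intro z hz
        rcases hz with rfl | rfl
        · exact ha1W
        · exact hb1W
      · rw [Set.ncard_pair hane1]
        omega
    rw [hWpair] at ha2W hb2W
    have hee : (e1 : Sym2 V) = (e2 : Sym2 V) := by
      rw [hab1, hab2]
      rcases ha2W with rfl | rfl <;> rcases hb2W with rfl | rfl
      · exact absurd rfl hane2
      · rfl
      · exact Sym2.eq_swap.symm
      · exact absurd rfl hane2
    have : e1 = e2 := Subtype.ext hee
    exact hEdisj i j hij e1 he1 (this ▸ he2)
  -- the subgraphs
  set Uadj : Fin n → G.edgeSet → G.edgeSet → Prop := fun i a b =>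
    a ≠ b ∧ ((a ∈ E i ∪ S₀ ∧ a ≠ r i ∧ Fp i a = b) ∨
      (b ∈ E i ∪ S₀ ∧ b ≠ r i ∧ Fp i b = a)) with hUadj
  have hUadjsub : ∀ i a b, Uadj i a b → G.lineGraph.Adj a b := by
    intro i a b hab
    obtain ⟨hne, hcase⟩ := hab
    rcases hcase with ⟨hm, hr', hF'⟩ | ⟨hm, hr', hF'⟩
    · obtain ⟨-, -, ⟨z, hz1, hz2⟩, -⟩ := hFpSpec i a hm hr'
      rw [hF'] at hz2
      exact lineGraph_adj_iff_exists.mpr ⟨hne, z, hz1, hz2⟩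
    · obtain ⟨-, -, ⟨z, hz1, hz2⟩, -⟩ := hFpSpec i b hm hr'
      rw [hF'] at hz2
      exact lineGraph_adj_iff_exists.mpr ⟨hne, z, hz2, hz1⟩
  have hUvert : ∀ i a b, Uadj i a b → a ∈ E i ∪ S₀ := by
    intro i a b hab
    obtain ⟨hne, hcase⟩ := hab
    rcases hcase with ⟨hm, _, _⟩ | ⟨hm, hr', hF'⟩
    · exact hm
    · rw [← hF']
      exact Or.inl (hFpSpec i b hm hr').1
  have hUsymm : ∀ i, Symmetric (Uadj i) := by
    intro i a b hab
    obtain ⟨hne, hcase⟩ := hab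
    exact ⟨hne.symm, hcase.symm⟩
  set U : Fin n → (G.lineGraph).Subgraph := fun i =>
    { verts := E i ∪ S₀
      Adj := Uadj i
      adj_sub := fun {a b} h => hUadjsub i a b h
      edge_vert := fun {a b} h => hUvert i a b h
      symm := ⟨fun a b h => hUsymm i h⟩ } with hU
  have hUverts : ∀ i, (U i).verts = E i ∪ S₀ := fun i => rfl
  have hUAdj : ∀ i a b, (U i).Adj a b ↔ Uadj i a b := fun i a b => Iff.rfl
  have hrmem : ∀ i, r i ∈ E i ∪ S₀ := fun i => Or.inl (hrE i)
  have hUtree : ∀ i, (U i).coe.IsTree := by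
    intro i
    have hreach : ∀ m (a : ↥(U i).verts), Ht i ↑a ≤ m →
        (U i).coe.Reachable a ⟨r i, hrmem i⟩ := by
      intro m
      induction m with
      | zero =>
        intro a ha
        have har : (a : G.edgeSet) = r i := by
          by_contra har
          have h1 : 0 < Ht i ↑a := by
            simp only [hHt]
            rw [if_neg har]
            by_cases h2 : (a : G.edgeSet) ∈ E i
            · rw [if_pos h2]; omega
            · rw [if_neg h2]; omega
          omega
        have : a = ⟨r i, hrmem i⟩ := Subtype.ext har
        rw [this]
      | succ m ih =>
        intro a ha
        by_cases har : (a : G.edgeSet) = r i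
        · have : a = ⟨r i, hrmem i⟩ := Subtype.ext har
          rw [this]
        · have hmem : (a : G.edgeSet) ∈ E i ∪ S₀ := a.2
          obtain ⟨hmem', hne', hsh', hlt'⟩ := hFpSpec i ↑a hmem har
          have hadj : (U i).coe.Adj a ⟨Fp i ↑a, Or.inl hmem'⟩ := by
            show Uadj i ↑a (Fp i ↑a)
            exact ⟨hne'.symm, Or.inl ⟨hmem, har, rfl⟩⟩
          exact hadj.reachable.trans (ih ⟨Fp i ↑a, Or.inl hmem'⟩ (show Ht i (Fp i ↑a) ≤ m by omega))
    have hconn : (U i).coe.Connected := by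
      haveI : Nonempty ↥(U i).verts := ⟨⟨r i, hrmem i⟩⟩
      refine ⟨fun u v => ?_⟩
      exact (hreach (Ht i ↑u) u le_rfl).trans (hreach (Ht i ↑v) v le_rfl).symm
    have hacyc : (U i).coe.IsAcyclic := by
      apply parentTree_isAcyclic _ (fun a : ↥(U i).verts =>
          if h : (a : G.edgeSet) = r i then a
          else ⟨Fp i ↑a, Or.inl (hFpSpec i ↑a a.2 h).1⟩)
        (fun a => Ht i ↑a) ⟨r i, hrmem i⟩
      · intro a b hab
        obtain ⟨hne, hcase⟩ : Uadj i ↑a ↑b := hab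
        rcases hcase with ⟨hm, hr', hF'⟩ | ⟨hm, hr', hF'⟩
        · left
          refine ⟨fun hh => hr' (congrArg Subtype.val hh), ?_⟩
          rw [dif_neg hr']
          exact Subtype.ext hF'
        · right
          refine ⟨fun hh => hr' (congrArg Subtype.val hh), ?_⟩
          rw [dif_neg hr']
          exact Subtype.ext hF'
      · intro a har
        have har' : (a : G.edgeSet) ≠ r i := fun hh => har (Subtype.ext hh)
        rw [dif_neg har']
        exact (hFpSpec i ↑a a.2 har').2.2.2
    exact ⟨hconn, hacyc⟩
  refine ⟨U, fun i => ⟨hUtree i, ?_⟩, ?_⟩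
  · rw [hUverts i]
    exact Set.subset_union_right
  intro i j hij
  constructor
  · rw [Set.disjoint_left]
    intro z hzi hzj
    induction z with
    | _ a b =>
    have hzi' : Uadj i a b := Subgraph.mem_edgeSet.mp hzi
    have hzj' : Uadj j a b := Subgraph.mem_edgeSet.mp hzj
    obtain ⟨hne, hcase_i⟩ := hzi'
    obtain ⟨-, hcase_j⟩ := hzj'
    have key : ∀ (i' j' : Fin n), i' ≠ j' → ∀ (a' b' : G.edgeSet),
        (a' ∈ E i' ∪ S₀ ∧ a' ≠ r i' ∧ Fp i' a' = b') →
        (b' ∈ E j' ∪ S₀ ∧ b' ≠ r j' ∧ Fp j' b' = a') → False := by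
      intro i' j' hij' a' b' ⟨hmi, hri, hFi⟩ ⟨hmj, hrj, hFj⟩
      have hbEi : b' ∈ E i' := hFi ▸ (hFpSpec i' a' hmi hri).1
      have haEj : a' ∈ E j' := hFj ▸ (hFpSpec j' b' hmj hrj).1
      have haEi : a' ∉ E i' := fun h => hEdisj i' j' hij' a' h haEj
      have hbEj : b' ∉ E j' := fun h => hEdisj i' j' hij' b' hbEi h
      have haS : a' ∈ S₀ := by
        rcases hmi with h | h
        · exact absurd h haEi
        · exact h
      have hbS : b' ∈ S₀ := by
        rcases hmj with h | h
        · exact absurd h hbEj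
        · exact h
      have hFi' : f i' a' = b' := by rw [← hFpS i' a' haS haEi]; exact hFi
      have hFj' : f j' b' = a' := by rw [← hFpS j' b' hbS hbEj]; exact hFj
      exact hconflict i' j' hij' a' b' haS haEi hbS hbEj hFi' hFj'
    rcases hcase_i with ⟨hmi, hri, hFi⟩ | ⟨hmi, hri, hFi⟩ <;>
      rcases hcase_j with ⟨hmj, hrj, hFj⟩ | ⟨hmj, hrj, hFj⟩
    · -- both parents of a
      have h1 : b ∈ E i := hFi ▸ (hFpSpec i a hmi hri).1
      have h2 : b ∈ E j := hFj ▸ (hFpSpec j a hmj hrj).1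
      exact hEdisj i j hij b h1 h2
    · exact key i j hij a b ⟨hmi, hri, hFi⟩ ⟨hmj, hrj, hFj⟩
    · exact key j i (Ne.symm hij) a b ⟨hmj, hrj, hFj⟩ ⟨hmi, hri, hFi⟩
    · have h1 : a ∈ E i := hFi ▸ (hFpSpec i b hmi hri).1
      have h2 : a ∈ E j := hFj ▸ (hFpSpec j b hmj hrj).1
      exact hEdisj i j hij a h1 h2
  · rw [hUverts i, hUverts j]
    ext z
    constructor
    · rintro ⟨hz1, hz2⟩
      rcases hz1 with h1 | h1
      · rcases hz2 with h2 | h2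
        · exact (hEdisj i j hij z h1 h2).elim
        · exact h2
      · exact h1
    · intro hz
      exact ⟨Or.inr hz, Or.inr hz⟩

end Main

/-- If `G` is connected with at least `k` vertices and at least `k` edges (`k ≥ 2`),
then `κ_k(L(G)) ≥ λ_k(G)`. -/
theorem treeConn_lineGraph_ge_treeEdgeConn [Fintype V] (G : SimpleGraph V)
    (k : ℕ) (hk : 2 ≤ k) (hG : G.Connected)
    (hv : k ≤ Fintype.card V) (he : k ≤ G.edgeSet.ncard) :
    treeEdgeConn G k ≤ treeConn G.lineGraph k := by
  classical
  haveI : Fintype ↥G.edgeSet := Fintype.ofFinite _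
  have hcardX : k ≤ (Finset.univ : Finset ↥G.edgeSet).card := by
    rw [Finset.card_univ]
    have hh : Fintype.card ↥G.edgeSet = G.edgeSet.ncard := by
      rw [← Nat.card_coe_set_eq, Nat.card_eq_fintype_card]
    omega
  obtain ⟨S₀f, -, hS₀f⟩ := Finset.exists_subset_card_eq hcardX
  have hKne : {m | ∃ S : Set ↥G.edgeSet, S.ncard = k ∧
      m = steinerKappa G.lineGraph S}.Nonempty :=
    ⟨steinerKappa G.lineGraph ↑S₀f, ↑S₀f, by rw [Set.ncard_coe_finset, hS₀f], rfl⟩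
  obtain ⟨S₀, hS₀k, hEq⟩ := Nat.sInf_mem hKne
  obtain ⟨W, hWcard, hmain⟩ := main_construction hG k hk hv S₀ hS₀k
  have h1 : treeEdgeConn G k ≤ steinerLambda G ↑W :=
    Nat.sInf_le ⟨↑W, by rw [Set.ncard_coe_finset, hWcard], rfl⟩
  refine le_trans h1 ?_
  unfold treeConn
  rw [hEq]
  unfold steinerLambda
  apply csSup_le
  · exact ⟨0, Fin.elim0, fun i => i.elim0, fun i j _ => i.elim0⟩
  · intro b hb
    have hpack := hmain b hb
    unfold steinerKappa
    apply le_csSup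
    · refine ⟨Nat.card (Sym2 ↥G.edgeSet), ?_⟩
      rintro m hm
      exact internally_bound (by rw [hS₀k]; omega) m hm
    · exact hpack
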